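/- There exists an absolute constant C > 0 such that for all real numbers a > 0, b ≥ 2a, and t > 0: | ∫₀^t (sin((t − t₁) a) / a) ∫₀^{t₁} (sin((t − t₂) a) / a) cos((t₁ − t₂) b) t₂² dt₂ dt₁ | ≤ C t³ / (a² b). (This is the oscillatory upper bound, equation (div2b) of the paper, used in the proof of Proposition 1.3 to show that the high-modulation contribution to the variance of the second-order wave object is summable.) -/

import Mathlib

open intervalIntegral Real

lemma osc_antideriv (c ω : ℝ) (hω : ω ≠ 0) (s : ℝ) :
    HasDerivAt (fun s => -Real.cos (c + ω * s) * s ^ 2 / ω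
        + 2 * s * Real.sin (c + ω * s) / ω ^ 2 + 2 * Real.cos (c + ω * s) / ω ^ 3)
      (Real.sin (c + ω * s) * s ^ 2) s := by
  have hlin : HasDerivAt (fun s : ℝ => c + ω * s) ω s := by
    simpa using ((hasDerivAt_id s).const_mul ω).const_add c
  have hcos : HasDerivAt (fun s => Real.cos (c + ω * s)) (-Real.sin (c + ω * s) * ω) s :=
    (Real.hasDerivAt_cos _).comp s hlin
  have hsin : HasDerivAt (fun s => Real.sin (c + ω * s)) (Real.cos (c + ω * s) * ω) s :=
    (Real.hasDerivAt_sin _).comp s hlin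
  have h1 : HasDerivAt (fun s => -Real.cos (c + ω * s) * s ^ 2 / ω)
      ((-(-Real.sin (c + ω * s) * ω) * s ^ 2 + -Real.cos (c + ω * s) * (2 * s)) / ω) s := by
    have := (hcos.neg.mul ((hasDerivAt_pow 2 s))).div_const ω
    refine this.congr_deriv ?_
    simp only [Pi.neg_apply]
    ring
  have h2 : HasDerivAt (fun s => 2 * s * Real.sin (c + ω * s) / ω ^ 2)
      ((2 * Real.sin (c + ω * s) + 2 * s * (Real.cos (c + ω * s) * ω)) / ω ^ 2) s := by
    have := (((hasDerivAt_id s).const_mul 2).mul hsin).div_const (ω ^ 2)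
    refine this.congr_deriv ?_
    simp only [id_eq]
    ring
  have h3 : HasDerivAt (fun s => 2 * Real.cos (c + ω * s) / ω ^ 3)
      (2 * (-Real.sin (c + ω * s) * ω) / ω ^ 3) s := by
    exact (hcos.const_mul 2).div_const (ω ^ 3)
  have := (h1.add h2).add h3
  refine this.congr_deriv ?_
  field_simp
  ring

lemma arith_bound {b t w T : ℝ} (hb : 0 < b) (hw : b / 2 ≤ w) (hbt : 1 ≤ b * t)
    (hT0 : 0 ≤ T) (hTt : T ≤ t) :
    T ^ 2 / w + 2 * T / w ^ 2 + 4 / w ^ 3 ≤ 42 * t ^ 2 / b := by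
  have hw0 : 0 < w := lt_of_lt_of_le (by linarith) hw
  have ht : 0 < t := by nlinarith
  have hT2 : T ^ 2 ≤ t ^ 2 := by nlinarith
  have e1 : T ^ 2 / w ≤ 2 * t ^ 2 / b := by
    rw [div_le_div_iff₀ hw0 hb]; nlinarith [mul_le_mul_of_nonneg_left hw (sq_nonneg t)]
  have e2 : 2 * T / w ^ 2 ≤ 8 * t ^ 2 / b := by
    rw [div_le_div_iff₀ (by positivity) hb]
    have h1 : b ^ 2 / 4 ≤ w ^ 2 := by nlinarith
    have h2 : 2 * T * b ≤ 2 * t * b := by nlinarith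
    have h3 : 2 * t * b * 1 ≤ 2 * t * b * (b * t) := by
      refine mul_le_mul_of_nonneg_left hbt (by positivity)
    nlinarith [mul_le_mul_of_nonneg_left h1 (mul_nonneg (mul_nonneg (by norm_num : (0:ℝ) ≤ 8) (sq_nonneg t)) hb.le)]
  have e3 : 4 / w ^ 3 ≤ 32 * t ^ 2 / b := by
    rw [div_le_div_iff₀ (by positivity) hb]
    have h1 : b ^ 3 / 8 ≤ w ^ 3 := by
      have := pow_le_pow_left₀ (show (0:ℝ) ≤ b / 2 by linarith) hw 3
      nlinarith [this]
    have h2 : 1 ≤ (b * t) ^ 2 := by nlinarith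
    have h3 : b ^ 3 * 1 ≤ b ^ 3 * (b * t) ^ 2 := mul_le_mul_of_nonneg_left h2 (by positivity)
    nlinarith [mul_le_mul_of_nonneg_left h1 (mul_nonneg (mul_nonneg (by norm_num : (0:ℝ) ≤ 32) (sq_nonneg t)) (by positivity : (0:ℝ) ≤ 1))]
  have hsum : 2 * t ^ 2 / b + 8 * t ^ 2 / b + 32 * t ^ 2 / b = 42 * t ^ 2 / b := by ring
  linarith [e1, e2, e3, hsum]

lemma osc_bound (c ω b t : ℝ) (hb : 0 < b) (hω : b / 2 ≤ |ω|) (hbt : 1 ≤ b * t)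
    {T : ℝ} (hT0 : 0 ≤ T) (hTt : T ≤ t) :
    |∫ s in (0:ℝ)..T, Real.sin (c + ω * s) * s ^ 2| ≤ 42 * t ^ 2 / b := by
  have hω0 : ω ≠ 0 := by
    intro h; rw [h] at hω; simp at hω; linarith
  have ht : 0 < t := by nlinarith
  have hbt' : 1 / b ≤ t := by rw [div_le_iff₀ hb]; linarith [mul_comm b t]
  set F : ℝ → ℝ := fun s => -Real.cos (c + ω * s) * s ^ 2 / ω
        + 2 * s * Real.sin (c + ω * s) / ω ^ 2 + 2 * Real.cos (c + ω * s) / ω ^ 3 with hF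
  have hint : (∫ s in (0:ℝ)..T, Real.sin (c + ω * s) * s ^ 2) = F T - F 0 := by
    apply intervalIntegral.integral_eq_sub_of_hasDerivAt
    · intro s _; exact osc_antideriv c ω hω0 s
    · apply Continuous.intervalIntegrable; fun_prop
  rw [hint]
  have habs : 0 < |ω| := abs_pos.mpr hω0
  -- basic bounds
  have hi1 : 1 / |ω| ≤ 2 / b := by
    rw [div_le_div_iff₀ habs hb]; linarith
  have hi2 : 1 / |ω| ^ 2 ≤ 4 / b ^ 2 := by
    rw [div_le_div_iff₀ (by positivity) (by positivity)]; nlinarith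
  have hi3 : 1 / |ω| ^ 3 ≤ 8 / b ^ 3 := by
    have hc := pow_le_pow_left₀ (show (0:ℝ) ≤ b / 2 by linarith) hω 3
    rw [div_le_div_iff₀ (by positivity) (by positivity)]
    nlinarith
  have bnd : ∀ s : ℝ, 0 ≤ s → s ≤ t → |F s| ≤ s ^ 2 / |ω| + 2 * s / |ω| ^ 2 + 2 / |ω| ^ 3 := by
    intro s hs0 hst
    have h1 : |(-Real.cos (c + ω * s) * s ^ 2 / ω)| ≤ s ^ 2 / |ω| := by
      rw [abs_div, abs_mul, abs_neg]
      calc |Real.cos (c + ω * s)| * |s ^ 2| / |ω| ≤ 1 * |s ^ 2| / |ω| := by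
            gcongr; exact Real.abs_cos_le_one _
        _ = s ^ 2 / |ω| := by rw [one_mul, abs_of_nonneg (sq_nonneg s)]
    have h2 : |2 * s * Real.sin (c + ω * s) / ω ^ 2| ≤ 2 * s / |ω| ^ 2 := by
      rw [abs_div, abs_mul, abs_pow]
      calc |2 * s| * |Real.sin (c + ω * s)| / |ω| ^ 2 ≤ |2 * s| * 1 / |ω| ^ 2 := by
            gcongr; exact Real.abs_sin_le_one _
        _ = 2 * s / |ω| ^ 2 := by rw [mul_one, abs_of_nonneg (by linarith : (0:ℝ) ≤ 2 * s)]
    have h3 : |2 * Real.cos (c + ω * s) / ω ^ 3| ≤ 2 / |ω| ^ 3 := by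
      rw [abs_div, abs_mul, abs_pow]
      calc |(2:ℝ)| * |Real.cos (c + ω * s)| / |ω| ^ 3 ≤ |(2:ℝ)| * 1 / |ω| ^ 3 := by
            gcongr; exact Real.abs_cos_le_one _
        _ = 2 / |ω| ^ 3 := by norm_num
    calc |F s| ≤ |(-Real.cos (c + ω * s) * s ^ 2 / ω)| + |2 * s * Real.sin (c + ω * s) / ω ^ 2|
          + |2 * Real.cos (c + ω * s) / ω ^ 3| := by
          simp only [hF]; exact (abs_add_le _ _).trans (by gcongr; exact abs_add_le _ _)
      _ ≤ _ := by gcongr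
  have hFT := bnd T hT0 hTt
  have hF0 := bnd 0 le_rfl ht.le
  have key : |F T - F 0| ≤ T ^ 2 / |ω| + 2 * T / |ω| ^ 2 + 4 / |ω| ^ 3 := by
    calc |F T - F 0| ≤ |F T| + |F 0| := abs_sub _ _
      _ ≤ (T ^ 2 / |ω| + 2 * T / |ω| ^ 2 + 2 / |ω| ^ 3)
          + (0 ^ 2 / |ω| + 2 * 0 / |ω| ^ 2 + 2 / |ω| ^ 3) := add_le_add hFT hF0
      _ = T ^ 2 / |ω| + 2 * T / |ω| ^ 2 + 4 / |ω| ^ 3 := by ring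
  refine key.trans ?_
  exact arith_bound hb hω hbt hT0 hTt

lemma inner_osc {a b t t₁ : ℝ} (ha : 0 < a) (hab : 2 * a ≤ b) (hbt : 1 ≤ b * t)
    (h0 : 0 ≤ t₁) (h1 : t₁ ≤ t) :
    |∫ s in (0:ℝ)..t₁, Real.sin ((t - s) * a) / a * (Real.cos ((t₁ - s) * b) * s ^ 2)|
      ≤ 42 * t ^ 2 / (a * b) := by
  have hb : 0 < b := by linarith
  have key : ∀ s : ℝ, Real.sin ((t - s) * a) / a * (Real.cos ((t₁ - s) * b) * s ^ 2)
      = (1 / (2 * a)) * (Real.sin ((t * a + t₁ * b) + (-(a + b)) * s) * s ^ 2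
        + Real.sin ((t * a - t₁ * b) + (b - a) * s) * s ^ 2) := by
    intro s
    have e1 : (t * a + t₁ * b) + (-(a + b)) * s = ((t - s) * a) + ((t₁ - s) * b) := by ring
    have e2 : (t * a - t₁ * b) + (b - a) * s = ((t - s) * a) - ((t₁ - s) * b) := by ring
    rw [e1, e2, Real.sin_add, Real.sin_sub]
    field_simp
    ring
  rw [intervalIntegral.integral_congr (fun s _ => key s), intervalIntegral.integral_const_mul,
    intervalIntegral.integral_add (by apply Continuous.intervalIntegrable; fun_prop)
      (by apply Continuous.intervalIntegrable; fun_prop)]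
  have hw1 : b / 2 ≤ |(-(a + b))| := by
    rw [abs_neg, abs_of_nonneg (by linarith)]; linarith
  have hw2 : b / 2 ≤ |b - a| := by
    rw [abs_of_nonneg (by linarith)]; linarith
  have B1 := osc_bound (t * a + t₁ * b) (-(a + b)) b t hb hw1 hbt h0 h1
  have B2 := osc_bound (t * a - t₁ * b) (b - a) b t hb hw2 hbt h0 h1
  calc |1 / (2 * a) * ((∫ s in (0:ℝ)..t₁, Real.sin ((t * a + t₁ * b) + (-(a + b)) * s) * s ^ 2)
          + ∫ s in (0:ℝ)..t₁, Real.sin ((t * a - t₁ * b) + (b - a) * s) * s ^ 2)|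
      ≤ (1 / (2 * a)) * (42 * t ^ 2 / b + 42 * t ^ 2 / b) := by
        rw [abs_mul, abs_of_nonneg (by positivity : (0:ℝ) ≤ 1 / (2 * a))]
        refine mul_le_mul_of_nonneg_left ((abs_add_le _ _).trans (add_le_add B1 B2)) (by positivity)
    _ = 42 * t ^ 2 / (a * b) := by field_simp; ring

theorem stmt17 :
    ∃ C > 0, ∀ a b t : ℝ, 0 < a → 2 * a ≤ b → 0 < t →
      |∫ t₁ in (0 : ℝ)..t, (Real.sin ((t - t₁) * a) / a) *
          ∫ t₂ in (0 : ℝ)..t₁, (Real.sin ((t - t₂) * a) / a) *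
            (Real.cos ((t₁ - t₂) * b) * t₂ ^ 2)|
        ≤ C * t ^ 3 / (a ^ 2 * b) := by
  refine ⟨42, by norm_num, ?_⟩
  intro a b t ha hab ht
  have hb : 0 < b := by linarith
  by_cases hbt : 1 ≤ b * t
  · -- oscillatory case
    have bound : ∀ t₁ ∈ Set.uIoc (0:ℝ) t,
        ‖Real.sin ((t - t₁) * a) / a *
          ∫ t₂ in (0 : ℝ)..t₁, Real.sin ((t - t₂) * a) / a
            * (Real.cos ((t₁ - t₂) * b) * t₂ ^ 2)‖ ≤ 42 * t ^ 2 / (a ^ 2 * b) := by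
      intro t₁ ht₁
      rw [Set.uIoc_of_le ht.le] at ht₁
      rw [Real.norm_eq_abs, abs_mul]
      have hA : |Real.sin ((t - t₁) * a) / a| ≤ 1 / a := by
        rw [abs_div, abs_of_pos ha]
        gcongr
        exact Real.abs_sin_le_one _
      have hB := inner_osc ha hab hbt ht₁.1.le ht₁.2
      calc |Real.sin ((t - t₁) * a) / a| * |_| ≤ (1 / a) * (42 * t ^ 2 / (a * b)) :=
            mul_le_mul hA hB (abs_nonneg _) (by positivity)
        _ = 42 * t ^ 2 / (a ^ 2 * b) := by field_simp
    have := intervalIntegral.norm_integral_le_of_norm_le_const bound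
    rw [Real.norm_eq_abs] at this
    refine this.trans ?_
    rw [sub_zero, abs_of_pos ht]
    rw [div_mul_eq_mul_div, div_le_div_iff₀ (by positivity) (by positivity)]
    ring_nf
    nlinarith [sq_nonneg t, sq_nonneg a, mul_pos ha hb]
  · -- trivial case
    push_neg at hbt
    have inner_triv : ∀ t₁ : ℝ, 0 ≤ t₁ → t₁ ≤ t →
        |∫ t₂ in (0 : ℝ)..t₁, Real.sin ((t - t₂) * a) / a
            * (Real.cos ((t₁ - t₂) * b) * t₂ ^ 2)| ≤ t ^ 3 / a := by
      intro t₁ h0 h1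
      have bnd : ∀ s ∈ Set.uIoc (0:ℝ) t₁,
          ‖Real.sin ((t - s) * a) / a * (Real.cos ((t₁ - s) * b) * s ^ 2)‖ ≤ t ^ 2 / a := by
        intro s hs
        rw [Set.uIoc_of_le h0] at hs
        rw [Real.norm_eq_abs, abs_mul, abs_div, abs_of_pos ha, abs_mul]
        have hs2 : |s ^ 2| ≤ t ^ 2 := by
          rw [abs_of_nonneg (sq_nonneg s)]; nlinarith [hs.1, hs.2]
        calc |Real.sin ((t - s) * a)| / a * (|Real.cos ((t₁ - s) * b)| * |s ^ 2|)
            ≤ 1 / a * (1 * t ^ 2) := by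
              refine mul_le_mul (by gcongr; exact Real.abs_sin_le_one _)
                (mul_le_mul (Real.abs_cos_le_one _) hs2 (abs_nonneg _) one_pos.le)
                (by positivity) (by positivity)
          _ = t ^ 2 / a := by ring
      have h := intervalIntegral.norm_integral_le_of_norm_le_const bnd
      rw [Real.norm_eq_abs, sub_zero, abs_of_nonneg h0] at h
      refine h.trans ?_
      rw [div_mul_eq_mul_div]
      gcongr
      nlinarith
    have bound : ∀ t₁ ∈ Set.uIoc (0:ℝ) t,
        ‖Real.sin ((t - t₁) * a) / a *
          ∫ t₂ in (0 : ℝ)..t₁, Real.sin ((t - t₂) * a) / a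
            * (Real.cos ((t₁ - t₂) * b) * t₂ ^ 2)‖ ≤ t ^ 3 / a ^ 2 := by
      intro t₁ ht₁
      rw [Set.uIoc_of_le ht.le] at ht₁
      rw [Real.norm_eq_abs, abs_mul]
      have hA : |Real.sin ((t - t₁) * a) / a| ≤ 1 / a := by
        rw [abs_div, abs_of_pos ha]
        gcongr
        exact Real.abs_sin_le_one _
      calc |Real.sin ((t - t₁) * a) / a| * |_|
          ≤ (1 / a) * (t ^ 3 / a) :=
            mul_le_mul hA (inner_triv t₁ ht₁.1.le ht₁.2) (abs_nonneg _) (by positivity)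
        _ = t ^ 3 / a ^ 2 := by field_simp
    have h := intervalIntegral.norm_integral_le_of_norm_le_const bound
    rw [Real.norm_eq_abs, sub_zero, abs_of_pos ht] at h
    refine h.trans ?_
    rw [div_mul_eq_mul_div, div_le_div_iff₀ (by positivity) (by positivity)]
    have key : b * t ≤ 1 := hbt.le
    nlinarith [mul_le_mul_of_nonneg_left key (by positivity : (0:ℝ) ≤ t ^ 3 * a ^ 2)]
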